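/- A clause is blocked for a literal p with respect to a CNF Γ if and only if it is set-blocked for the singleton {p} with respect to Γ; i.e., every blocked clause is a set-blocked clause. -/
import Mathlib


open Classical

abbrev Var := ℕ
abbrev Lit := Var × Bool

def negLit (l : Lit) : Lit := (l.1, !l.2)

abbrev Clause := Finset Lit

/-- A set of literals is tautological if it contains a complementary pair. -/
def Tauto (S : Finset Lit) : Prop := ∃ l ∈ S, negLit l ∈ S

abbrev CNF := Set Clause

abbrev Assign := Var → Bool

def SatLit (α : Assign) (l : Lit) : Prop := α l.1 = l.2
def SatClause (α : Assign) (C : Clause) : Prop := ∃ l ∈ C, SatLit α l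
def SatCNF (α : Assign) (Γ : CNF) : Prop := ∀ C ∈ Γ, SatClause α C
def Satisfiable (Γ : CNF) : Prop := ∃ α, SatCNF α Γ
def Equisat (Γ Δ : CNF) : Prop := Satisfiable Γ ↔ Satisfiable Δ

/-- `C` is a blocked clause for the literal `p` with respect to `Γ`. -/
def Blocked (C : Clause) (p : Lit) (Γ : CNF) : Prop :=
  p ∈ C ∧ ∀ D ∈ Γ, negLit p ∈ D → Tauto (C.erase p ∪ D.erase (negLit p))

def negSet (L : Finset Lit) : Finset Lit := L.image negLit

/-- `C` is a set-blocked clause for `L` with respect to `Γ`. -/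
def SetBlocked (C : Clause) (L : Finset Lit) (Γ : CNF) : Prop :=
  L.Nonempty ∧ L ⊆ C ∧
    ∀ D ∈ Γ, (D ∩ negSet L).Nonempty → D ∩ L = ∅ →
      Tauto ((C \ L) ∪ (D \ negSet L))

def varsClause (C : Clause) : Finset Var := C.image Prod.fst
def varsCNF (Γ : CNF) : Set Var := {v | ∃ C ∈ Γ, v ∈ varsClause C}

/-- Partial assignments. -/
abbrev PAssign := Var → Option Bool

def restrictClause (α : PAssign) (C : Clause) : Clause :=
  C.filter fun l => α l.1 ≠ some (!l.2)

def PSatClause' (α : PAssign) (C : Clause) : Prop := ∃ l ∈ C, α l.1 = some l.2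

def restrictCNF (α : PAssign) (Γ : CNF) : CNF :=
  {E | ∃ C ∈ Γ, ¬ PSatClause' α C ∧ E = restrictClause α C}

/-- `E` is a resolvent of `F` and `G`. -/
def Resolvent (E F G : Clause) : Prop :=
  ∃ (x : Var) (A B : Clause), x ∉ varsClause A ∧ x ∉ varsClause B ∧
    F = insert (x, true) A ∧ G = insert (x, false) B ∧
    E = A ∪ B ∧ ¬ Tauto (A ∪ B)

/-- One step of a resolution proof: add a resolvent or a weakening. -/
def ResStep (Γ Γ' : CNF) : Prop :=
  ∃ C, Γ' = Γ ∪ {C} ∧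
    ((∃ F ∈ Γ, ∃ G ∈ Γ, Resolvent C F G) ∨ (∃ D ∈ Γ, D ⊆ C ∧ ¬ Tauto C))

/-- A resolution proof (refutation) of `Γ`. -/
def ResProofOf (Γ : CNF) (prf : List CNF) : Prop :=
  prf.head? = some Γ ∧ (∃ Δ, prf.getLast? = some Δ ∧ (∅ : Clause) ∈ Δ) ∧
    List.Chain' ResStep prf

/-- One step of a unit propagation proof: resolve against a unit clause, or weaken. -/
def UnitStep (Γ Γ' : CNF) : Prop :=
  ∃ C, Γ' = Γ ∪ {C} ∧
    ((∃ l, ({negLit l} : Clause) ∈ Γ ∧ l.1 ∉ varsClause C ∧ insert l C ∈ Γ)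
      ∨ (∃ D ∈ Γ, D ⊆ C ∧ ¬ Tauto C))

/-- `Γ` has a unit propagation refutation. -/
def UPRefutes (Γ : CNF) : Prop :=
  ∃ prf : List CNF, prf.head? = some Γ ∧ (∃ Δ, prf.getLast? = some Δ ∧ (∅ : Clause) ∈ Δ) ∧
    List.Chain' UnitStep prf

def negUnits (L : Finset Lit) : CNF := {C | ∃ p ∈ L, C = {negLit p}}

/-- `Γ ⊢₁ C`. -/
def UPDerives (Γ : CNF) (C : Clause) : Prop := UPRefutes (Γ ∪ negUnits C)

/-- Partial assignments as consistent sets of literals. -/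
def Consistent (α : Set Lit) : Prop := ∀ l ∈ α, negLit l ∉ α
def PSatClause (α : Set Lit) (C : Clause) : Prop := ∃ l ∈ C, l ∈ α
def PSatCNF (α : Set Lit) (Γ : CNF) : Prop := ∀ C ∈ Γ, PSatClause α C
def MinSat (α : Set Lit) (Γ : CNF) : Prop :=
  Consistent α ∧ PSatCNF α Γ ∧ ∀ β ⊂ α, ¬ PSatCNF β Γ

/-- `μ(Γ)`: clauses whose negation minimally satisfies `Γ`. -/
def mu (Γ : CNF) : CNF := {E | MinSat (↑(E.image negLit)) Γ}

/-- Projection of `Γ` onto a literal. -/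
def proj (p : Lit) (Γ : CNF) : CNF := {E | ∃ D ∈ Γ, p ∈ D ∧ E = D.erase p}

/-- blocked for `p` iff set-blocked for `{p}`. -/
theorem blocked_iff_setBlocked_singleton (Γ : CNF) (C : Clause) (p : Lit)
    (hΓ : ∀ D ∈ Γ, ¬ Tauto D) :
    Blocked C p Γ ↔ SetBlocked C {p} Γ := by
  have hneg : negSet {p} = ({negLit p} : Finset Lit) := by
    simp [negSet]
  have hCe : C \ {p} = C.erase p := by
    ext l; simp [Finset.mem_erase, Finset.mem_sdiff, and_comm]
  constructor
  · rintro ⟨hp, h⟩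
    refine ⟨⟨p, Finset.mem_singleton_self p⟩, by simpa using hp, ?_⟩
    intro D hD hne _
    have hnp : negLit p ∈ D := by
      obtain ⟨l, hl⟩ := hne
      rw [hneg] at hl
      simp only [Finset.mem_inter, Finset.mem_singleton] at hl
      rw [← hl.2]; exact hl.1
    have hDe : D \ negSet {p} = D.erase (negLit p) := by
      rw [hneg]; ext l; simp [Finset.mem_erase, Finset.mem_sdiff, and_comm]
    rw [hCe, hDe]
    exact h D hD hnp
  · rintro ⟨-, hp, h⟩
    refine ⟨by simpa using hp, ?_⟩
    intro D hD hnp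
    have hpD : p ∉ D := by
      intro hpD
      exact hΓ D hD ⟨p, hpD, hnp⟩
    have h1 : (D ∩ negSet {p}).Nonempty :=
      ⟨negLit p, by rw [hneg]; simp [Finset.mem_inter, hnp]⟩
    have h2 : D ∩ {p} = ∅ := by
      ext l; simp only [Finset.mem_inter, Finset.mem_singleton, Finset.notMem_empty, iff_false]
      rintro ⟨hl, rfl⟩; exact hpD hl
    have := h D hD h1 h2
    have hDe : D \ negSet {p} = D.erase (negLit p) := by
      rw [hneg]; ext l; simp [Finset.mem_erase, Finset.mem_sdiff, and_comm]
    rwa [hCe, hDe] at this
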